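/- Let p ∈ (0,1), |ψ⟩ = √p|0⟩ + √(1−p)|1⟩, ρ₀ = |ψ⟩⟨ψ|, ρ₁ = ½I, Δ = |2p−1|, and β_n(ε) = inf{ Tr(Z[ρ₁^{⊗n}] E) : 0 ≤ E ≤ I, Tr(Z[ρ₀^{⊗n}] E) ≥ 1−ε }. Then: (a) for ε ∈ [1/2, 1) and all n ≥ 1, β_n(ε) = (1−ε) / ((1+Δ^n) 2^{n−1}); (b) for ε ∈ (0, 1/2) and all n large enough that Δ^n < 1−2ε, β_n(ε) = (1 − Δ^n − ε) / ((1−Δ^n) 2^{n−1}). -/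

import Mathlib

open Matrix Complex Set Filter

noncomputable section

/-- Number of 1s in a bit string. -/
def ones {n : ℕ} (x : Fin n → Fin 2) : ℕ := (Finset.univ.filter fun i => x i = 1).card

/-- The `n`-fold tensor power of a one-qubit operator, as a matrix indexed by bit strings. -/
def mpow (n : ℕ) (ρ : Matrix (Fin 2) (Fin 2) ℂ) :
    Matrix (Fin n → Fin 2) (Fin n → Fin 2) ℂ :=
  Matrix.of fun x y => ∏ i, ρ (x i) (y i)

/-- The parity operator ω = σ_z^{⊗n}: it multiplies a computational basis vector by
(-1)^(number of 1s). -/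
def parityOp (n : ℕ) : Matrix (Fin n → Fin 2) (Fin n → Fin 2) ℂ :=
  Matrix.diagonal fun x => (-1 : ℂ) ^ ones x

/-- The ℤ₂-twirling Z[X] = ½ (X + ωXω). -/
def twirl {n : ℕ} (X : Matrix (Fin n → Fin 2) (Fin n → Fin 2) ℂ) :
    Matrix (Fin n → Fin 2) (Fin n → Fin 2) ℂ :=
  (2 : ℂ)⁻¹ • (X + parityOp n * X * parityOp n)

/-- Rank-one projection |ψ⟩⟨ψ| on one qubit. -/
def projv (ψ : Fin 2 → ℂ) : Matrix (Fin 2) (Fin 2) ℂ := vecMulVec ψ (star ψ)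

/-- Rank-one projection |ψ⟩⟨ψ| on n qubits. -/
def projN {n : ℕ} (ψ : (Fin n → Fin 2) → ℂ) :
    Matrix (Fin n → Fin 2) (Fin n → Fin 2) ℂ := vecMulVec ψ (star ψ)

def ket0 : Fin 2 → ℂ := ![1, 0]

def ket1 : Fin 2 → ℂ := ![0, 1]

/-- The qubit state √p |0⟩ + e^{iφ} √(1-p) |1⟩. -/
def qubit (p φ : ℝ) : Fin 2 → ℂ :=
  ![(Real.sqrt p : ℂ), Complex.exp (Complex.I * φ) * (Real.sqrt (1 - p) : ℂ)]

/-- The qubit state √p |0⟩ + √(1-p) |1⟩. -/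
def qubitR (p : ℝ) : Fin 2 → ℂ := ![(Real.sqrt p : ℂ), (Real.sqrt (1 - p) : ℂ)]

open scoped ComplexOrder

/-- The set of type-II error probabilities Tr(σ₁ E) over POVM elements 0 ≤ E ≤ I
(Loewner order) whose type-I error is at most ε, i.e. Tr(σ₀ E) ≥ 1-ε. -/
def errSet (n : ℕ) (σ0 σ1 : Matrix (Fin n → Fin 2) (Fin n → Fin 2) ℂ) (ε : ℝ) : Set ℝ :=
  { x | ∃ E : Matrix (Fin n → Fin 2) (Fin n → Fin 2) ℂ,
      E.IsHermitian ∧ E.PosSemidef ∧ (1 - E).PosSemidef ∧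
      1 - ε ≤ ((σ0 * E).trace).re ∧ x = ((σ1 * E).trace).re }

/-- The maximally mixed qubit state ½ I. -/
def mmix : Matrix (Fin 2) (Fin 2) ℂ := (2 : ℂ)⁻¹ • 1

variable {n : ℕ}

lemma projN_apply (w : (Fin n → Fin 2) → ℂ) (x y) : projN w x y = w x * star (w y) := rfl

lemma trace_projN (w : (Fin n → Fin 2) → ℂ) : (projN w).trace = star w ⬝ᵥ w := by
  simp [projN, Matrix.trace, Matrix.diag, vecMulVec_apply, dotProduct, mul_comm]

lemma projN_mulVec (w x : (Fin n → Fin 2) → ℂ) : projN w *ᵥ x = (star w ⬝ᵥ x) • w := by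
  ext i
  simp only [projN, mulVec, dotProduct, vecMulVec_apply, Pi.star_apply, Pi.smul_apply,
    smul_eq_mul, Finset.sum_mul]
  exact Finset.sum_congr rfl fun j _ => by ring

lemma trace_projN_mul (w : (Fin n → Fin 2) → ℂ) (E) :
    (projN w * E).trace = star w ⬝ᵥ (E *ᵥ w) := by
  simp only [Matrix.trace, Matrix.diag, Matrix.mul_apply, projN, vecMulVec_apply,
    Pi.star_apply, dotProduct, mulVec, Finset.mul_sum]
  rw [Finset.sum_comm]
  exact Finset.sum_congr rfl fun j _ => Finset.sum_congr rfl fun i _ => by ring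

lemma projN_mul (a b : (Fin n → Fin 2) → ℂ) :
    projN a * projN b = (star a ⬝ᵥ b) • vecMulVec a (star b) := by
  ext x y
  simp only [Matrix.mul_apply, projN, vecMulVec_apply, Pi.star_apply, Matrix.smul_apply,
    smul_eq_mul, dotProduct, Finset.sum_mul]
  exact Finset.sum_congr rfl fun j _ => by ring

lemma projN_isHermitian (w : (Fin n → Fin 2) → ℂ) : (projN w).IsHermitian := by
  ext x y
  simp [projN, conjTranspose_apply, vecMulVec_apply, mul_comm]

lemma projN_posSemidef (w : (Fin n → Fin 2) → ℂ) : (projN w).PosSemidef := by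
  refine PosSemidef.of_dotProduct_mulVec_nonneg (projN_isHermitian w) fun x => ?_
  rw [projN_mulVec, dotProduct_smul]
  have hx : star x ⬝ᵥ w = star (star w ⬝ᵥ x) := by
    simp [dotProduct, Finset.sum_comm, mul_comm]
  rw [smul_eq_mul, hx, Complex.star_def, Complex.mul_conj]
  exact_mod_cast Complex.normSq_nonneg _

lemma smul_projN_posSemidef {c : ℝ} (hc : 0 ≤ c) (w : (Fin n → Fin 2) → ℂ) :
    ((c:ℂ) • projN w).PosSemidef := by
  have h := projN_posSemidef w
  refine PosSemidef.of_dotProduct_mulVec_nonneg ?_ fun x => ?_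
  · have := h.1
    unfold Matrix.IsHermitian at *
    rw [conjTranspose_smul, this]
    simp [Complex.star_def, Complex.conj_ofReal]
  · rw [smul_mulVec, dotProduct_smul, smul_eq_mul]
    have h2 := h.dotProduct_mulVec_nonneg x
    have : (0:ℂ) ≤ (c:ℂ) := by exact_mod_cast Complex.zero_le_real.mpr hc
    exact mul_nonneg this h2

lemma psd_trace_re_nonneg {M : Matrix (Fin n → Fin 2) (Fin n → Fin 2) ℂ}
    (hM : M.PosSemidef) : 0 ≤ M.trace.re := by
  rw [Matrix.trace]
  have : ∀ i, 0 ≤ (M i i).re := by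
    intro i
    have h := hM.dotProduct_mulVec_nonneg (Pi.single i 1)
    have he : star (Pi.single i 1) ⬝ᵥ (M *ᵥ Pi.single i 1) = M i i := by
      simp [dotProduct, mulVec, Pi.single_apply, apply_ite (star : ℂ → ℂ)]
    rw [he] at h
    exact (Complex.nonneg_iff.mp h).1
  calc (0:ℝ) ≤ ∑ i, (M.diag i).re := Finset.sum_nonneg fun i _ => this i
  _ = (∑ i, M.diag i).re := by rw [Complex.re_sum]

lemma trace_mul_psd_psd {A B : Matrix (Fin n → Fin 2) (Fin n → Fin 2) ℂ}
    (hA : A.PosSemidef) (hB : B.PosSemidef) : 0 ≤ ((A * B).trace).re := by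
  open scoped MatrixOrder in
  obtain ⟨C, rfl⟩ := CStarAlgebra.nonneg_iff_eq_star_mul_self.mp hA.nonneg
  rw [Matrix.mul_assoc, Matrix.trace_mul_comm]
  exact psd_trace_re_nonneg (hB.mul_mul_conjTranspose_same C)

lemma core (n : ℕ) (wp wm : (Fin n → Fin 2) → ℂ)
    (h1 : star wp ⬝ᵥ wp = 1) (h2 : star wm ⬝ᵥ wm = 1)
    (h3 : star wp ⬝ᵥ wm = 0) (h4 : star wm ⬝ᵥ wp = 0)
    (cp cm m ε sp sm : ℝ) (hcm : 0 < cm) (hcc : cm ≤ cp) (hm : 0 < m)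
    (hsp : sp ∈ Set.Icc (0:ℝ) 1) (hsm : sm ∈ Set.Icc (0:ℝ) 1)
    (heq : cp * sp + cm * sm = 1 - ε)
    (hopt : ∀ tp tm : ℝ, tp ∈ Set.Icc (0:ℝ) 1 → tm ∈ Set.Icc (0:ℝ) 1 →
      1 - ε ≤ cp * tp + cm * tm → sp + sm ≤ tp + tm) :
    sInf (errSet n ((cp:ℂ) • projN wp + (cm:ℂ) • projN wm) ((m:ℂ) • 1) ε)
      = m * (sp + sm) := by
  set Pp := projN wp with hPp
  set Pm := projN wm with hPm
  set Q : Matrix (Fin n → Fin 2) (Fin n → Fin 2) ℂ := 1 - Pp - Pm with hQ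
  have hPpPp : Pp * Pp = Pp := by rw [hPp, projN_mul, h1, one_smul]; rfl
  have hPmPm : Pm * Pm = Pm := by rw [hPm, projN_mul, h2, one_smul]; rfl
  have hPpPm : Pp * Pm = 0 := by rw [hPp, hPm, projN_mul, h3, zero_smul]
  have hPmPp : Pm * Pp = 0 := by rw [hPp, hPm, projN_mul, h4, zero_smul]
  have hQherm : Q.IsHermitian := by
    refine ((Matrix.isHermitian_one.sub (projN_isHermitian wp)).sub (projN_isHermitian wm))
  have hQQ : Q * Q = Q := by
    rw [hQ]
    simp only [Matrix.sub_mul, Matrix.mul_sub, Matrix.one_mul, Matrix.mul_one,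
      hPpPp, hPmPm, hPpPm, hPmPp]
    noncomm_ring
  have hQpsd : Q.PosSemidef := by
    have := Matrix.posSemidef_conjTranspose_mul_self Q
    rwa [hQherm.eq, hQQ] at this
  -- the optimal measurement
  set E0 : Matrix (Fin n → Fin 2) (Fin n → Fin 2) ℂ := (sp:ℂ) • Pp + (sm:ℂ) • Pm with hE0
  have hE0psd : E0.PosSemidef :=
    (smul_projN_posSemidef hsp.1 wp).add (smul_projN_posSemidef hsm.1 wm)
  have hE0sub : (1 - E0) = ((1-sp:ℝ):ℂ) • Pp + (((1-sm:ℝ):ℂ) • Pm + Q) := by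
    rw [hE0, hQ]
    push_cast
    simp only [sub_smul, one_smul]
    abel
  have h1E0 : (1 - E0).PosSemidef := by
    rw [hE0sub]
    exact (smul_projN_posSemidef (by linarith [hsp.2]) wp).add
      (((smul_projN_posSemidef (by linarith [hsm.2]) wm)).add hQpsd)
  have hE0mulp : E0 *ᵥ wp = (sp:ℂ) • wp := by
    rw [hE0, Matrix.add_mulVec, smul_mulVec, smul_mulVec, hPp, hPm,
      projN_mulVec, projN_mulVec, h1, h4]
    simp
  have hE0mulm : E0 *ᵥ wm = (sm:ℂ) • wm := by
    rw [hE0, Matrix.add_mulVec, smul_mulVec, smul_mulVec, hPp, hPm,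
      projN_mulVec, projN_mulVec, h2, h3]
    simp
  have htr0 : ((((cp:ℂ) • Pp + (cm:ℂ) • Pm) * E0).trace) = ((1 - ε : ℝ) : ℂ) := by
    rw [Matrix.add_mul, Matrix.smul_mul, Matrix.smul_mul, Matrix.trace_add,
      Matrix.trace_smul, Matrix.trace_smul, hPp, hPm, trace_projN_mul, trace_projN_mul,
      hE0mulp, hE0mulm, dotProduct_smul, dotProduct_smul, h1, h2]
    simp only [smul_eq_mul, mul_one]
    rw [← heq]
    push_cast
    ring
  have htr1 : ((((m:ℂ) • (1:Matrix (Fin n → Fin 2) (Fin n → Fin 2) ℂ)) * E0).trace)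
      = ((m * (sp + sm) : ℝ) : ℂ) := by
    rw [Matrix.smul_mul, Matrix.one_mul, Matrix.trace_smul, hE0, Matrix.trace_add,
      Matrix.trace_smul, Matrix.trace_smul, hPp, hPm, trace_projN, trace_projN, h1, h2]
    simp only [smul_eq_mul, mul_one]
    push_cast
    ring
  have hmem : m * (sp + sm) ∈ errSet n ((cp:ℂ) • Pp + (cm:ℂ) • Pm) ((m:ℂ) • 1) ε := by
    refine ⟨E0, hE0psd.1, hE0psd, h1E0, ?_, ?_⟩
    · rw [htr0]; simp
    · rw [htr1]; simp
  have hlb : ∀ x ∈ errSet n ((cp:ℂ) • Pp + (cm:ℂ) • Pm) ((m:ℂ) • 1) ε,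
      m * (sp + sm) ≤ x := by
    rintro x ⟨E, hH, hPSD, h1E, hcon, rfl⟩
    set tp : ℝ := (star wp ⬝ᵥ (E *ᵥ wp)).re with htp
    set tm : ℝ := (star wm ⬝ᵥ (E *ᵥ wm)).re with htm
    have htp0 : 0 ≤ tp := (Complex.nonneg_iff.mp (hPSD.dotProduct_mulVec_nonneg wp)).1
    have htm0 : 0 ≤ tm := (Complex.nonneg_iff.mp (hPSD.dotProduct_mulVec_nonneg wm)).1
    have hub : ∀ (w : (Fin n → Fin 2) → ℂ), star w ⬝ᵥ w = 1 →
        (star w ⬝ᵥ (E *ᵥ w)).re ≤ 1 := by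
      intro w hw
      have h := (Complex.nonneg_iff.mp (h1E.dotProduct_mulVec_nonneg w)).1
      rw [Matrix.sub_mulVec, Matrix.one_mulVec, dotProduct_sub, hw] at h
      simpa using h
    have htp1 : tp ≤ 1 := hub wp h1
    have htm1 : tm ≤ 1 := hub wm h2
    have hconval : ((((cp:ℂ) • Pp + (cm:ℂ) • Pm) * E).trace).re = cp * tp + cm * tm := by
      rw [Matrix.add_mul, Matrix.smul_mul, Matrix.smul_mul, Matrix.trace_add,
        Matrix.trace_smul, Matrix.trace_smul, hPp, hPm, trace_projN_mul, trace_projN_mul]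
      simp [Complex.add_re, Complex.re_ofReal_mul, smul_eq_mul]
      rfl
    have hcon' : 1 - ε ≤ cp * tp + cm * tm := by rwa [hconval] at hcon
    have hval : ((((m:ℂ) • (1:Matrix (Fin n → Fin 2) (Fin n → Fin 2) ℂ)) * E).trace).re
        = m * E.trace.re := by
      rw [Matrix.smul_mul, Matrix.one_mul, Matrix.trace_smul]
      simp [Complex.re_ofReal_mul, smul_eq_mul]
    have hdecomp : E.trace = (Pp * E).trace + (Pm * E).trace + (Q * E).trace := by
      rw [← Matrix.trace_add, ← Matrix.trace_add, ← Matrix.add_mul, ← Matrix.add_mul, hQ]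
      congr 1
      rw [show Pp + Pm + (1 - Pp - Pm) = 1 by abel, Matrix.one_mul]
    have htrE : tp + tm ≤ E.trace.re := by
      rw [hdecomp]
      have h3' := trace_mul_psd_psd hQpsd hPSD
      rw [hPp, hPm, trace_projN_mul, trace_projN_mul]
      simp only [Complex.add_re]
      linarith
    rw [hval]
    have := hopt tp tm ⟨htp0, htp1⟩ ⟨htm0, htm1⟩ hcon'
    nlinarith
  exact le_antisymm (csInf_le ⟨_, hlb⟩ hmem) (le_csInf ⟨_, hmem⟩ hlb)
-- concrete vectors
def uR (p : ℝ) {n : ℕ} (x : Fin n → Fin 2) : ℝ := ∏ i, ![Real.sqrt p, Real.sqrt (1-p)] (x i)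
def vR (p : ℝ) {n : ℕ} (x : Fin n → Fin 2) : ℝ := ∏ i, ![Real.sqrt p, -Real.sqrt (1-p)] (x i)
def esign (p : ℝ) (n : ℕ) : ℝ := if 0 ≤ (2*p-1)^n then 1 else -1
def Wp (p : ℝ) (n : ℕ) : (Fin n → Fin 2) → ℂ :=
  fun x => (((Real.sqrt (2*(1+|2*p-1|^n)))⁻¹ * (uR p x + esign p n * vR p x) : ℝ) : ℂ)
def Wm (p : ℝ) (n : ℕ) : (Fin n → Fin 2) → ℂ :=
  fun x => (((Real.sqrt (2*(1-|2*p-1|^n)))⁻¹ * (uR p x - esign p n * vR p x) : ℝ) : ℂ)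

lemma esign_sq (p : ℝ) (n : ℕ) : esign p n * esign p n = 1 := by
  unfold esign; split_ifs <;> norm_num

lemma esign_mul (p : ℝ) (n : ℕ) : esign p n * (2*p-1)^n = |2*p-1|^n := by
  rw [← _root_.abs_pow]
  unfold esign
  split_ifs with h
  · rw [one_mul, _root_.abs_of_nonneg h]
  · rw [_root_.abs_of_neg (lt_of_not_ge h)]; ring

lemma sum_prod_eq {n : ℕ} (g : Fin 2 → ℝ) :
    ∑ x : Fin n → Fin 2, ∏ i, g (x i) = (∑ j, g j)^n := by
  calc ∑ x : Fin n → Fin 2, ∏ i, g (x i)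
      = ∑ x ∈ Fintype.piFinset (fun _ : Fin n => (Finset.univ : Finset (Fin 2))),
          ∏ i, g (x i) := by rw [Fintype.piFinset_univ]
    _ = ∏ _i : Fin n, ∑ j, g j := (Finset.prod_univ_sum _ _).symm
    _ = (∑ j, g j)^n := by rw [Finset.prod_const, Finset.card_univ, Fintype.card_fin]

lemma sum_mul_prod {n : ℕ} (g1 g2 : Fin 2 → ℝ) :
    ∑ x : Fin n → Fin 2, (∏ i, g1 (x i)) * (∏ i, g2 (x i)) = (∑ j, g1 j * g2 j)^n := by
  rw [← sum_prod_eq (fun j => g1 j * g2 j)]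
  exact Finset.sum_congr rfl fun x _ => (Finset.prod_mul_distrib).symm

variable {p : ℝ} {n : ℕ}

lemma sum_uu (hp : p ∈ Set.Ioo (0:ℝ) 1) : ∑ x : Fin n → Fin 2, uR p x * uR p x = 1 := by
  unfold uR
  rw [sum_mul_prod]
  have : ∑ j : Fin 2, ![Real.sqrt p, Real.sqrt (1-p)] j * ![Real.sqrt p, Real.sqrt (1-p)] j
      = 1 := by
    rw [Fin.sum_univ_two]
    simp only [Matrix.cons_val_zero, Matrix.cons_val_one, Matrix.head_cons]
    rw [Real.mul_self_sqrt hp.1.le, Real.mul_self_sqrt (by linarith [hp.2])]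
    ring
  rw [this, one_pow]

lemma sum_vv (hp : p ∈ Set.Ioo (0:ℝ) 1) : ∑ x : Fin n → Fin 2, vR p x * vR p x = 1 := by
  unfold vR
  rw [sum_mul_prod]
  have : ∑ j : Fin 2, ![Real.sqrt p, -Real.sqrt (1-p)] j * ![Real.sqrt p, -Real.sqrt (1-p)] j
      = 1 := by
    rw [Fin.sum_univ_two]
    simp only [Matrix.cons_val_zero, Matrix.cons_val_one, Matrix.head_cons, neg_mul_neg]
    rw [Real.mul_self_sqrt hp.1.le, Real.mul_self_sqrt (by linarith [hp.2])]
    ring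
  rw [this, one_pow]

lemma sum_uv (hp : p ∈ Set.Ioo (0:ℝ) 1) :
    ∑ x : Fin n → Fin 2, uR p x * vR p x = (2*p-1)^n := by
  unfold uR vR
  rw [sum_mul_prod]
  congr 1
  rw [Fin.sum_univ_two]
  simp only [Matrix.cons_val_zero, Matrix.cons_val_one, Matrix.head_cons, mul_neg]
  rw [Real.mul_self_sqrt hp.1.le, Real.mul_self_sqrt (by linarith [hp.2])]
  ring
lemma parity_sq (n : ℕ) : parityOp n * parityOp n = 1 := by
  rw [parityOp, Matrix.diagonal_mul_diagonal]
  convert Matrix.diagonal_one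
  rw [← pow_add, ← two_mul, pow_mul]
  norm_num

lemma mpow_mmix (n : ℕ) : mpow n mmix = (((1/2:ℝ)^n : ℝ) : ℂ) • 1 := by
  ext x y
  by_cases h : x = y
  · subst h
    simp [mpow, mmix, Matrix.one_apply, Matrix.smul_apply]
  · obtain ⟨i, hi⟩ : ∃ i, x i ≠ y i := by
      by_contra hc
      push_neg at hc
      exact h (funext hc)
    have : (mpow n mmix) x y = 0 := by
      rw [mpow, Matrix.of_apply]
      apply Finset.prod_eq_zero (Finset.mem_univ i)
      simp [mmix, Matrix.one_apply, hi]
    rw [this, Matrix.smul_apply, Matrix.one_apply_ne h, smul_zero]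

lemma twirl_smul_one (n : ℕ) (c : ℂ) :
    twirl (c • (1 : Matrix (Fin n → Fin 2) (Fin n → Fin 2) ℂ)) = c • 1 := by
  rw [twirl]
  rw [Matrix.mul_smul, Matrix.smul_mul, Matrix.mul_one, parity_sq]
  rw [← two_smul ℂ (c • (1:Matrix (Fin n → Fin 2) (Fin n → Fin 2) ℂ)), smul_smul]
  norm_num

lemma twirl_mmix (n : ℕ) :
    twirl (mpow n mmix) = (((1/2:ℝ)^n : ℝ) : ℂ) • 1 := by
  rw [mpow_mmix, twirl_smul_one]

lemma ones_eq {n : ℕ} (x : Fin n → Fin 2) : ones x = ∑ i, (x i : ℕ) := by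
  rw [ones, Finset.card_filter]
  exact Finset.sum_congr rfl fun i _ => by
    have : ∀ j : Fin 2, (if j = 1 then 1 else 0) = (j:ℕ) := by decide
    rw [this]

lemma vR_eq {p : ℝ} {n : ℕ} (x : Fin n → Fin 2) :
    vR p x = (-1:ℝ)^(ones x) * uR p x := by
  rw [ones_eq, vR, uR]
  have h : ∀ j : Fin 2, ![Real.sqrt p, -Real.sqrt (1-p)] j
      = (-1:ℝ)^(j:ℕ) * ![Real.sqrt p, Real.sqrt (1-p)] j := by
    intro j; fin_cases j <;> simp
  calc ∏ i, ![Real.sqrt p, -Real.sqrt (1-p)] (x i)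
      = ∏ i, ((-1:ℝ)^((x i : ℕ)) * ![Real.sqrt p, Real.sqrt (1-p)] (x i)) :=
        Finset.prod_congr rfl fun i _ => by rw [h]
    _ = (∏ i, (-1:ℝ)^((x i : ℕ))) * ∏ i, ![Real.sqrt p, Real.sqrt (1-p)] (x i) :=
        Finset.prod_mul_distrib
    _ = (-1:ℝ)^(∑ i, (x i : ℕ)) * ∏ i, ![Real.sqrt p, Real.sqrt (1-p)] (x i) := by
        rw [Finset.prod_pow_eq_pow_sum]

lemma mpow_proj (p : ℝ) (hp : p ∈ Set.Ioo (0:ℝ) 1) (n : ℕ) :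
    mpow n (projv (qubitR p)) = Matrix.of fun x y => ((uR p x * uR p y : ℝ) : ℂ) := by
  ext x y
  rw [mpow, Matrix.of_apply, Matrix.of_apply]
  have hq : ∀ j : Fin 2, qubitR p j = ((![Real.sqrt p, Real.sqrt (1-p)] j : ℝ) : ℂ) := by
    intro j; fin_cases j <;> simp [qubitR]
  have : ∀ a b : Fin 2, projv (qubitR p) a b
      = ((![Real.sqrt p, Real.sqrt (1-p)] a * ![Real.sqrt p, Real.sqrt (1-p)] b : ℝ) : ℂ) := by
    intro a b
    rw [projv, vecMulVec_apply, Pi.star_apply, hq, hq, Complex.star_def, Complex.conj_ofReal,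
      ← Complex.ofReal_mul]
  simp_rw [this]
  rw [← Complex.ofReal_prod]
  rw [uR, uR, ← Finset.prod_mul_distrib]
section main
variable {p : ℝ} {n : ℕ}

lemma sum_quad (hp : p ∈ Set.Ioo (0:ℝ) 1) (c : ℝ) :
    ∑ x : Fin n → Fin 2, (uR p x + c * vR p x) * (uR p x + c * vR p x)
      = 1 + 2*c*(2*p-1)^n + c*c := by
  have expand : ∀ x : Fin n → Fin 2, (uR p x + c * vR p x) * (uR p x + c * vR p x)
      = uR p x * uR p x + (2*c)*(uR p x * vR p x) + (c*c)*(vR p x * vR p x) :=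
    fun x => by ring
  simp_rw [expand]
  rw [Finset.sum_add_distrib, Finset.sum_add_distrib, ← Finset.mul_sum, ← Finset.mul_sum,
    sum_uu hp, sum_uv hp, sum_vv hp]
  ring

lemma sum_cross (hp : p ∈ Set.Ioo (0:ℝ) 1) (c : ℝ) :
    ∑ x : Fin n → Fin 2, (uR p x + c * vR p x) * (uR p x - c * vR p x) = 1 - c*c := by
  have expand : ∀ x : Fin n → Fin 2, (uR p x + c * vR p x) * (uR p x - c * vR p x)
      = uR p x * uR p x - (c*c)*(vR p x * vR p x) := fun x => by ring
  simp_rw [expand]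
  rw [Finset.sum_sub_distrib, ← Finset.mul_sum, sum_uu hp, sum_vv hp]
  ring

lemma star_dot_ofReal (f g : (Fin n → Fin 2) → ℝ) :
    star (fun x => ((f x : ℝ) : ℂ)) ⬝ᵥ (fun x => ((g x : ℝ) : ℂ))
      = ((∑ x, f x * g x : ℝ) : ℂ) := by
  rw [dotProduct]
  push_cast
  exact Finset.sum_congr rfl fun x _ => by
    simp [Complex.star_def, Complex.conj_ofReal]

lemma wp_dot_wp (hp : p ∈ Set.Ioo (0:ℝ) 1) (hd : |2*p-1|^n < 1) :
    star (Wp p n) ⬝ᵥ Wp p n = 1 := by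
  set d : ℝ := |2*p-1|^n with hdd
  have hd0 : 0 ≤ d := by positivity
  unfold Wp
  rw [star_dot_ofReal, ← hdd]
  have expand : ∀ x : Fin n → Fin 2,
      ((Real.sqrt (2*(1+d)))⁻¹ * (uR p x + esign p n * vR p x))
        * ((Real.sqrt (2*(1+d)))⁻¹ * (uR p x + esign p n * vR p x))
      = ((Real.sqrt (2*(1+d)))⁻¹ * (Real.sqrt (2*(1+d)))⁻¹)
        * ((uR p x + esign p n * vR p x) * (uR p x + esign p n * vR p x)) := fun x => by ring
  simp_rw [expand]
  rw [← Finset.mul_sum, sum_quad hp, ← mul_inv, Real.mul_self_sqrt (by positivity)]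
  have h1 : 2 * (esign p n) * (2*p-1)^n = 2 * d := by rw [mul_assoc, esign_mul]
  rw [h1, esign_sq]
  have h2 : (1:ℝ) + 2*d + 1 = 2*(1+d) := by ring
  rw [h2, inv_mul_cancel₀ (by positivity)]
  norm_num

lemma wm_dot_wm (hp : p ∈ Set.Ioo (0:ℝ) 1) (hd : |2*p-1|^n < 1) :
    star (Wm p n) ⬝ᵥ Wm p n = 1 := by
  set d : ℝ := |2*p-1|^n with hdd
  have hd0 : 0 ≤ d := by positivity
  have hpos : (0:ℝ) < 2*(1-d) := by linarith
  unfold Wm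
  rw [star_dot_ofReal, ← hdd]
  have expand : ∀ x : Fin n → Fin 2,
      ((Real.sqrt (2*(1-d)))⁻¹ * (uR p x - esign p n * vR p x))
        * ((Real.sqrt (2*(1-d)))⁻¹ * (uR p x - esign p n * vR p x))
      = ((Real.sqrt (2*(1-d)))⁻¹ * (Real.sqrt (2*(1-d)))⁻¹)
        * ((uR p x + (- esign p n) * vR p x) * (uR p x + (- esign p n) * vR p x)) :=
    fun x => by ring
  simp_rw [expand]
  rw [← Finset.mul_sum, sum_quad hp, ← mul_inv, Real.mul_self_sqrt hpos.le]
  have h1 : 2 * (-esign p n) * (2*p-1)^n = -(2 * d) := by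
    rw [show 2 * (-esign p n) * (2*p-1)^n = -(2 * (esign p n * (2*p-1)^n)) by ring, esign_mul]
  rw [h1]
  have h2 : (1:ℝ) + -(2*d) + (-esign p n) * (-esign p n) = 2*(1-d) := by
    have := esign_sq p n; nlinarith [esign_sq p n]
  rw [h2, inv_mul_cancel₀ hpos.ne']
  norm_num

lemma wp_dot_wm (hp : p ∈ Set.Ioo (0:ℝ) 1) (hd : |2*p-1|^n < 1) :
    star (Wp p n) ⬝ᵥ Wm p n = 0 := by
  set d : ℝ := |2*p-1|^n with hdd
  unfold Wp Wm
  rw [star_dot_ofReal, ← hdd]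
  have expand : ∀ x : Fin n → Fin 2,
      ((Real.sqrt (2*(1+d)))⁻¹ * (uR p x + esign p n * vR p x))
        * ((Real.sqrt (2*(1-d)))⁻¹ * (uR p x - esign p n * vR p x))
      = ((Real.sqrt (2*(1+d)))⁻¹ * (Real.sqrt (2*(1-d)))⁻¹)
        * ((uR p x + esign p n * vR p x) * (uR p x - esign p n * vR p x)) := fun x => by ring
  simp_rw [expand]
  rw [← Finset.mul_sum, sum_cross hp, esign_sq]
  norm_num

lemma wm_dot_wp (hp : p ∈ Set.Ioo (0:ℝ) 1) (hd : |2*p-1|^n < 1) :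
    star (Wm p n) ⬝ᵥ Wp p n = 0 := by
  set d : ℝ := |2*p-1|^n with hdd
  unfold Wp Wm
  rw [star_dot_ofReal, ← hdd]
  have expand : ∀ x : Fin n → Fin 2,
      ((Real.sqrt (2*(1-d)))⁻¹ * (uR p x - esign p n * vR p x))
        * ((Real.sqrt (2*(1+d)))⁻¹ * (uR p x + esign p n * vR p x))
      = ((Real.sqrt (2*(1-d)))⁻¹ * (Real.sqrt (2*(1+d)))⁻¹)
        * ((uR p x + esign p n * vR p x) * (uR p x - esign p n * vR p x)) := fun x => by ring
  simp_rw [expand]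
  rw [← Finset.mul_sum, sum_cross hp, esign_sq]
  norm_num

end main
section twirlproj
variable {p : ℝ} {n : ℕ}

lemma twirl_proj (hp : p ∈ Set.Ioo (0:ℝ) 1) (hd : |2*p-1|^n < 1) :
    twirl (mpow n (projv (qubitR p)))
      = ((((1+|2*p-1|^n)/2 : ℝ)):ℂ) • projN (Wp p n)
        + ((((1-|2*p-1|^n)/2 : ℝ)):ℂ) • projN (Wm p n) := by
  set d : ℝ := |2*p-1|^n with hdd
  have hd0 : 0 ≤ d := by positivity
  have hap : (0:ℝ) < 2*(1+d) := by linarith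
  have ham : (0:ℝ) < 2*(1-d) := by linarith
  rw [mpow_proj p hp n, twirl]
  ext x y
  rw [Matrix.smul_apply, Matrix.add_apply, parityOp, Matrix.mul_diagonal,
    Matrix.diagonal_mul, Matrix.of_apply]
  rw [Matrix.add_apply, Matrix.smul_apply, Matrix.smul_apply,
    projN_apply, projN_apply]
  unfold Wp Wm
  simp only [Complex.star_def, Complex.conj_ofReal, smul_eq_mul]
  have hpow : ∀ z : Fin n → Fin 2, ((-1:ℂ))^(ones z) = (((-1:ℝ))^(ones z) : ℝ) := by
    intro z; push_cast; ring
  rw [hpow, hpow]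
  rw [show (2:ℂ)⁻¹ = ((2⁻¹:ℝ):ℂ) by norm_num]
  norm_cast
  push_cast
  rw [← hdd]
  rw [vR_eq x, vR_eq y] at *
  set e := esign p n with hee0
  set sx : ℝ := ((-1):ℝ)^(ones x) with hsx
  set sy : ℝ := ((-1):ℝ)^(ones y) with hsy
  set A := uR p x with hA
  set B := uR p y with hB
  set a : ℝ := (Real.sqrt (2*(1+d)))⁻¹ with ha0
  set b : ℝ := (Real.sqrt (2*(1-d)))⁻¹ with hb0
  have ha' : (2*(1+d)) * (a*a) = 1 := by
    rw [ha0, ← mul_inv, Real.mul_self_sqrt hap.le, mul_inv_cancel₀ hap.ne']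
  have hb' : (2*(1-d)) * (b*b) = 1 := by
    rw [hb0, ← mul_inv, Real.mul_self_sqrt ham.le, mul_inv_cancel₀ ham.ne']
  have hee : e * e = 1 := esign_sq p n
  linear_combination (-( (A + e*(sx*A)) * (B + e*(sy*B)) )/4) * ha'
    + (-( (A - e*(sx*A)) * (B - e*(sy*B)) )/4) * hb'
    + (-(sx*sy*A*B)/2) * hee

end twirlproj
/-- For ρ₀ = |ψ⟩⟨ψ| with |ψ⟩ = √p|0⟩+√(1-p)|1⟩, ρ₁ = ½I and
Δ = |2p−1|, the minimal type-II error β_n(ε) under ℤ₂-invariant measurements is: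
(a) (1−ε)/((1+Δ^n)2^{n−1}) for ε ∈ [1/2,1) and n ≥ 1;
(b) (1−Δ^n−ε)/((1−Δ^n)2^{n−1}) for ε ∈ (0,1/2) and n with Δ^n < 1−2ε. -/
theorem typeII_error_formula_pure_vs_mixed (p : ℝ) (hp : p ∈ Set.Ioo (0 : ℝ) 1) :
    (∀ ε ∈ Set.Ico (1 / 2 : ℝ) 1, ∀ n : ℕ, 1 ≤ n →
      sInf (errSet n (twirl (mpow n (projv (qubitR p)))) (twirl (mpow n mmix)) ε)
        = (1 - ε) / ((1 + |2 * p - 1| ^ n) * 2 ^ (n - 1))) ∧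
    (∀ ε ∈ Set.Ioo (0 : ℝ) (1 / 2), ∀ n : ℕ, |2 * p - 1| ^ n < 1 - 2 * ε →
      sInf (errSet n (twirl (mpow n (projv (qubitR p)))) (twirl (mpow n mmix)) ε)
        = (1 - |2 * p - 1| ^ n - ε) / ((1 - |2 * p - 1| ^ n) * 2 ^ (n - 1))) := by
  obtain ⟨hp0, hp1⟩ := hp
  have hΔ : |2*p-1| < 1 := by rw [abs_lt]; constructor <;> linarith
  have hΔ0 : (0:ℝ) ≤ |2*p-1| := abs_nonneg _
  constructor
  · rintro ε ⟨hε1, hε2⟩ n hn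
    obtain ⟨k, rfl⟩ : ∃ k, n = k + 1 := ⟨n - 1, by omega⟩
    set n := k + 1 with hnn
    have hd : |2*p-1|^n < 1 := pow_lt_one₀ hΔ0 hΔ (by omega)
    set d : ℝ := |2*p-1|^n with hdd
    have hd0 : (0:ℝ) ≤ d := by positivity
    rw [twirl_proj ⟨hp0, hp1⟩ hd, twirl_mmix]
    rw [core n (Wp p n) (Wm p n) (wp_dot_wp ⟨hp0, hp1⟩ hd) (wm_dot_wm ⟨hp0, hp1⟩ hd)
      (wp_dot_wm ⟨hp0, hp1⟩ hd) (wm_dot_wp ⟨hp0, hp1⟩ hd)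
      ((1+d)/2) ((1-d)/2) ((1/2)^n) ε ((1-ε)/((1+d)/2)) 0
      (by linarith) (by linarith) (by positivity)
      ⟨div_nonneg (by linarith) (by linarith), by rw [div_le_one (by linarith)]; linarith⟩
      ⟨le_refl 0, by norm_num⟩
      (by field_simp; ring)
      ?_]
    · have h2 : (2:ℝ)^(n-1) = 2^k := by rw [hnn]; norm_num
      rw [h2]
      have : ((1:ℝ)/2)^n = ((2:ℝ)^n)⁻¹ := by rw [one_div, inv_pow]
      rw [this, hnn]
      have h2n : (2:ℝ)^(k+1) = 2 * 2^k := by ring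
      rw [h2n]
      field_simp
      ring
    · intro tp tm htp htm hcon
      rw [add_zero, div_le_iff₀ (by linarith : (0:ℝ) < (1+d)/2)]
      nlinarith [mul_nonneg htm.1 hd0, htp.1, htm.1, htp.2, htm.2]
  · rintro ε ⟨hε0, hε2⟩ n hcond
    have hn : 1 ≤ n := by
      rcases Nat.eq_zero_or_pos n with h | h
      · subst h; simp at hcond; linarith
      · exact h
    obtain ⟨k, rfl⟩ : ∃ k, n = k + 1 := ⟨n - 1, by omega⟩
    set n := k + 1 with hnn
    set d : ℝ := |2*p-1|^n with hdd
    have hd0 : (0:ℝ) ≤ d := by positivity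
    have hd : d < 1 := by linarith
    have hcm : (0:ℝ) < (1-d)/2 := by linarith
    rw [twirl_proj ⟨hp0, hp1⟩ hd, twirl_mmix]
    rw [core n (Wp p n) (Wm p n) (wp_dot_wp ⟨hp0, hp1⟩ hd) (wm_dot_wm ⟨hp0, hp1⟩ hd)
      (wp_dot_wm ⟨hp0, hp1⟩ hd) (wm_dot_wp ⟨hp0, hp1⟩ hd)
      ((1+d)/2) ((1-d)/2) ((1/2)^n) ε 1 ((1-ε-(1+d)/2)/((1-d)/2))
      hcm (by linarith) (by positivity)
      ⟨by norm_num, le_refl 1⟩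
      ⟨div_nonneg (by linarith) hcm.le, by rw [div_le_one hcm]; linarith⟩
      (by
        have hdne : (1:ℝ) - d ≠ 0 := by linarith
        field_simp
        ring)
      ?_]
    · have h2 : (2:ℝ)^(n-1) = 2^k := by rw [hnn]; norm_num
      rw [h2]
      have : ((1:ℝ)/2)^n = ((2:ℝ)^n)⁻¹ := by rw [one_div, inv_pow]
      rw [this, hnn]
      have h2n : (2:ℝ)^(k+1) = 2 * 2^k := by ring
      rw [h2n]
      have hdne : (1:ℝ) - d ≠ 0 := by linarith
      field_simp
      ring
    · intro tp tm htp htm hcon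
      have key : (1-ε-(1+d)/2)/((1-d)/2) ≤ tp + tm - 1 := by
        rw [div_le_iff₀ hcm]
        nlinarith [mul_nonneg hd0 (by linarith [htp.2] : (0:ℝ) ≤ 1 - tp)]
      linarith
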